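/- For every real tensor T of order d with dimensions n_1, …, n_d, one has ‖T‖_σ = sup{⟨T, X⟩ : X a real tensor of the same order and dimensions with ‖X‖_* ≤ 1} and ‖T‖_* = sup{⟨T, X⟩ : X a real tensor of the same order and dimensions with ‖X‖_σ ≤ 1}, where ⟨T, X⟩ := ∑_{i_1, …, i_d} T(i_1, …, i_d)·X(i_1, …, i_d). -/
import Mathlib

noncomputable section

/-- Frobenius norm of a real tensor of order `d` with dimensions `n 0, …, n (d-1)`. -/
def frobNorm {d : ℕ} {n : Fin d → ℕ} (T : (∀ k, Fin (n k)) → ℝ) : ℝ :=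
  Real.sqrt (∑ i, (T i) ^ 2)

/-- Spectral norm: supremum of `|⟨T, x¹⊗⋯⊗x^d⟩|` over tuples of unit vectors. -/
def specNorm {d : ℕ} {n : Fin d → ℕ} (T : (∀ k, Fin (n k)) → ℝ) : ℝ :=
  sSup { r : ℝ | ∃ x : ∀ k, EuclideanSpace ℝ (Fin (n k)),
    (∀ k, ‖x k‖ = 1) ∧ r = |∑ i, T i * ∏ k, x k (i k)| }

/-- Nuclear norm: infimum of `∑ |λ_i|` over rank-one decompositions with unit vectors. -/
def nucNorm {d : ℕ} {n : Fin d → ℕ} (T : (∀ k, Fin (n k)) → ℝ) : ℝ :=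
  sInf { s : ℝ | ∃ (r : ℕ) (lam : Fin r → ℝ)
    (x : Fin r → ∀ k, EuclideanSpace ℝ (Fin (n k))),
    (∀ i k, ‖x i k‖ = 1) ∧ (∀ j, T j = ∑ i, lam i * ∏ k, x i k (j k)) ∧
    s = ∑ i, |lam i| }

namespace TensorDualAux

variable {d : ℕ} {n : Fin d → ℕ}

/-- The set whose supremum is the spectral norm. -/
def sSet (T : (∀ k, Fin (n k)) → ℝ) : Set ℝ :=
  { r : ℝ | ∃ x : ∀ k, EuclideanSpace ℝ (Fin (n k)),
    (∀ k, ‖x k‖ = 1) ∧ r = |∑ i, T i * ∏ k, x k (i k)| }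

/-- The set whose infimum is the nuclear norm. -/
def nSet (T : (∀ k, Fin (n k)) → ℝ) : Set ℝ :=
  { s : ℝ | ∃ (r : ℕ) (lam : Fin r → ℝ)
    (x : Fin r → ∀ k, EuclideanSpace ℝ (Fin (n k))),
    (∀ i k, ‖x i k‖ = 1) ∧ (∀ j, T j = ∑ i, lam i * ∏ k, x i k (j k)) ∧
    s = ∑ i, |lam i| }

lemma specNorm_eq (T : (∀ k, Fin (n k)) → ℝ) : specNorm T = sSup (sSet T) := rfl
lemma nucNorm_eq (T : (∀ k, Fin (n k)) → ℝ) : nucNorm T = sInf (nSet T) := rfl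

lemma coord_le_norm {m : ℕ} (v : EuclideanSpace ℝ (Fin m)) (j : Fin m) : |v j| ≤ ‖v‖ := by
  rw [EuclideanSpace.norm_eq, ← Real.sqrt_sq_eq_abs]
  apply Real.sqrt_le_sqrt
  have := Finset.single_le_sum (f := fun i => (v i) ^ 2) (fun i _ => sq_nonneg _)
    (Finset.mem_univ j)
  simpa [Real.norm_eq_abs, sq_abs] using this

/-- Basis vectors. -/
def bvec (j : ∀ k, Fin (n k)) : ∀ k, EuclideanSpace ℝ (Fin (n k)) :=
  fun k => EuclideanSpace.single (j k) 1

lemma bvec_norm (j : ∀ k, Fin (n k)) (k : Fin d) : ‖bvec j k‖ = 1 := by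
  simp [bvec, EuclideanSpace.norm_single]

lemma tprod_bvec (j i : ∀ k, Fin (n k)) :
    (∏ k, bvec j k (i k)) = if i = j then (1 : ℝ) else 0 := by
  have : ∀ k, bvec j k (i k) = if i k = j k then (1 : ℝ) else 0 := by
    intro k; simp [bvec, EuclideanSpace.single_apply]
  simp_rw [this]
  rw [Finset.prod_boole]
  simp [funext_iff]

lemma pair_bvec (T : (∀ k, Fin (n k)) → ℝ) (j : ∀ k, Fin (n k)) :
    (∑ i, T i * ∏ k, bvec j k (i k)) = T j := by
  simp_rw [tprod_bvec, mul_ite, mul_one, mul_zero]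
  simp

lemma sSet_le (T : (∀ k, Fin (n k)) → ℝ) {r : ℝ} (hr : r ∈ sSet T) :
    r ≤ ∑ i, |T i| := by
  obtain ⟨x, hx, rfl⟩ := hr
  calc |∑ i, T i * ∏ k, x k (i k)| ≤ ∑ i, |T i * ∏ k, x k (i k)| :=
        Finset.abs_sum_le_sum_abs _ _
    _ ≤ ∑ i, |T i| := by
        apply Finset.sum_le_sum
        intro i _
        rw [abs_mul]
        apply mul_le_of_le_one_right (abs_nonneg _)
        rw [Finset.abs_prod]
        apply Finset.prod_le_one
        · intro k _; exact abs_nonneg _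
        · intro k _
          calc |x k (i k)| ≤ ‖x k‖ := coord_le_norm _ _
            _ = 1 := hx k

lemma sSet_bddAbove (T : (∀ k, Fin (n k)) → ℝ) : BddAbove (sSet T) :=
  ⟨∑ i, |T i|, fun _ hr => sSet_le T hr⟩

lemma sSet_nonempty (hn : ∀ k, 0 < n k) (T : (∀ k, Fin (n k)) → ℝ) :
    (sSet T).Nonempty := by
  refine ⟨_, bvec (fun k => ⟨0, hn k⟩), fun k => bvec_norm _ k, rfl⟩

lemma le_spec {T : (∀ k, Fin (n k)) → ℝ} {r : ℝ} (hr : r ∈ sSet T) :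
    r ≤ specNorm T :=
  le_csSup (sSet_bddAbove T) hr

lemma abs_entry_le_spec (T : (∀ k, Fin (n k)) → ℝ) (j : ∀ k, Fin (n k)) :
    |T j| ≤ specNorm T := by
  apply le_spec (T := T)
  exact ⟨bvec j, fun k => bvec_norm _ k, by rw [pair_bvec]⟩

lemma spec_nonneg (hn : ∀ k, 0 < n k) (T : (∀ k, Fin (n k)) → ℝ) :
    0 ≤ specNorm T := by
  obtain ⟨r, hr⟩ := sSet_nonempty hn T
  have h0 : 0 ≤ r := by obtain ⟨x, hx, rfl⟩ := hr; exact abs_nonneg _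
  exact h0.trans (le_spec hr)

lemma nSet_nonneg {T : (∀ k, Fin (n k)) → ℝ} {s : ℝ} (hs : s ∈ nSet T) : 0 ≤ s := by
  obtain ⟨r, lam, x, hx, hT, rfl⟩ := hs
  exact Finset.sum_nonneg fun i _ => abs_nonneg _

lemma nSet_bddBelow (T : (∀ k, Fin (n k)) → ℝ) : BddBelow (nSet T) :=
  ⟨0, fun _ hs => nSet_nonneg hs⟩

lemma nSet_basis (T : (∀ k, Fin (n k)) → ℝ) : (∑ j, |T j|) ∈ nSet T := by
  classical
  set e := (Fintype.equivFin (∀ k, Fin (n k))).symm with he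
  refine ⟨Fintype.card (∀ k, Fin (n k)), fun i => T (e i), fun i => bvec (e i),
    fun i k => bvec_norm _ k, ?_, ?_⟩
  · intro j
    have : ∀ i, T (e i) * ∏ k, bvec (e i) k (j k)
        = (fun m => if j = m then T m else 0) (e i) := by
      intro i
      rw [tprod_bvec]
      by_cases h : j = e i <;> simp [h]
    simp_rw [this]
    rw [Equiv.sum_comp e (fun m => if j = m then T m else 0)]
    simp
  · exact (Equiv.sum_comp e (fun m => |T m|)).symm

lemma nuc_le {T : (∀ k, Fin (n k)) → ℝ} {s : ℝ} (hs : s ∈ nSet T) :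
    nucNorm T ≤ s :=
  csInf_le (nSet_bddBelow T) hs

lemma nuc_nonneg (T : (∀ k, Fin (n k)) → ℝ) : 0 ≤ nucNorm T :=
  le_csInf ⟨_, nSet_basis T⟩ fun _ hs => nSet_nonneg hs

lemma nuc_le_sum_abs (T : (∀ k, Fin (n k)) → ℝ) : nucNorm T ≤ ∑ j, |T j| :=
  nuc_le (nSet_basis T)

end TensorDualAux
namespace TensorDualAux

variable {d : ℕ} {n : Fin d → ℕ}

lemma pair_le_spec_mul (T X : (∀ k, Fin (n k)) → ℝ) {s : ℝ} (hs : s ∈ nSet X) :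
    (∑ i, T i * X i) ≤ specNorm T * s := by
  obtain ⟨r, lam, x, hx, hX, rfl⟩ := hs
  calc (∑ j, T j * X j)
      = ∑ i, lam i * ∑ j, T j * ∏ k, x i k (j k) := by
        simp_rw [hX, Finset.mul_sum]
        rw [Finset.sum_comm]
        apply Finset.sum_congr rfl
        intro i _
        apply Finset.sum_congr rfl
        intro j _
        ring
    _ ≤ ∑ i, |lam i| * specNorm T := by
        apply Finset.sum_le_sum
        intro i _
        calc lam i * ∑ j, T j * ∏ k, x i k (j k)
            ≤ |lam i * ∑ j, T j * ∏ k, x i k (j k)| := le_abs_self _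
          _ = |lam i| * |∑ j, T j * ∏ k, x i k (j k)| := abs_mul _ _
          _ ≤ |lam i| * specNorm T := by
              apply mul_le_mul_of_nonneg_left _ (abs_nonneg _)
              exact le_spec ⟨x i, hx i, rfl⟩
    _ = (∑ i, |lam i|) * specNorm T := by rw [Finset.sum_mul]
    _ = specNorm T * ∑ i, |lam i| := mul_comm _ _

lemma pair_le_spec_mul_nuc (hn : ∀ k, 0 < n k) (T X : (∀ k, Fin (n k)) → ℝ) :
    (∑ i, T i * X i) ≤ specNorm T * nucNorm X := by
  rcases eq_or_lt_of_le (spec_nonneg hn T) with h | h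
  · have hT : ∀ j, T j = 0 := by
      intro j
      have := abs_entry_le_spec T j
      rw [← h] at this
      exact abs_eq_zero.mp (le_antisymm this (abs_nonneg _))
    simp only [← h, zero_mul]
    rw [Finset.sum_eq_zero]
    intro i _
    rw [hT i, zero_mul]
  · rw [← div_le_iff₀' h]
    apply le_csInf ⟨_, nSet_basis X⟩
    intro s hs
    rw [div_le_iff₀' h]
    exact pair_le_spec_mul T X hs

lemma nuc_add (X Y : (∀ k, Fin (n k)) → ℝ) :
    nucNorm (X + Y) ≤ nucNorm X + nucNorm Y := by
  have key : ∀ s₁ ∈ nSet X, ∀ s₂ ∈ nSet Y, nucNorm (X + Y) ≤ s₁ + s₂ := by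
    rintro s₁ ⟨r₁, lam₁, x₁, hx₁, hX, rfl⟩ s₂ ⟨r₂, lam₂, x₂, hx₂, hY, rfl⟩
    have hmem : ((∑ i, |lam₁ i|) + ∑ i, |lam₂ i|) ∈ nSet (X + Y) := by
      refine ⟨r₁ + r₂, Fin.addCases lam₁ lam₂, Fin.addCases x₁ x₂, ?_, ?_, ?_⟩
      · intro i
        refine Fin.addCases (fun i => ?_) (fun i => ?_) i
        · intro k
          simp only [Fin.addCases_left]
          exact hx₁ _ k
        · intro k
          simp only [Fin.addCases_right]
          exact hx₂ _ k
      · intro j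
        rw [Fin.sum_univ_add]
        simp only [Fin.addCases_left, Fin.addCases_right, Pi.add_apply]
        rw [hX j, hY j]
      · rw [Fin.sum_univ_add]
        simp only [Fin.addCases_left, Fin.addCases_right]
    exact nuc_le hmem
  have h1 : ∀ s₁ ∈ nSet X, nucNorm (X + Y) - s₁ ≤ nucNorm Y := by
    intro s₁ hs₁
    apply le_csInf ⟨_, nSet_basis Y⟩
    intro s₂ hs₂
    linarith [key s₁ hs₁ s₂ hs₂]
  have h2 : nucNorm (X + Y) - nucNorm Y ≤ nucNorm X := by
    apply le_csInf ⟨_, nSet_basis X⟩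
    intro s₁ hs₁
    linarith [h1 s₁ hs₁]
  linarith

lemma nuc_smul_le {c : ℝ} (hc : 0 ≤ c) (X : (∀ k, Fin (n k)) → ℝ) :
    nucNorm (c • X) ≤ c * nucNorm X := by
  rcases eq_or_lt_of_le hc with rfl | hc
  · have : nucNorm ((0 : ℝ) • X) ≤ ∑ j, |((0 : ℝ) • X) j| := nuc_le_sum_abs _
    simpa using this
  · rw [← div_le_iff₀' hc]
    apply le_csInf ⟨_, nSet_basis X⟩
    intro s hs
    rw [div_le_iff₀' hc]
    obtain ⟨r, lam, x, hx, hX, rfl⟩ := hs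
    have hmem : (c * ∑ i, |lam i|) ∈ nSet (c • X) := by
      refine ⟨r, fun i => c * lam i, x, hx, ?_, ?_⟩
      · intro j
        simp only [Pi.smul_apply, smul_eq_mul, hX j, Finset.mul_sum, mul_assoc]
      · rw [Finset.mul_sum]
        apply Finset.sum_congr rfl
        intro i _
        rw [abs_mul, abs_of_nonneg hc.le]
    exact nuc_le hmem

lemma nucBall_convex : Convex ℝ {X : (∀ k, Fin (n k)) → ℝ | nucNorm X ≤ 1} := by
  intro X hX Y hY a b ha hb hab
  simp only [Set.mem_setOf_eq] at hX hY ⊢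
  calc nucNorm (a • X + b • Y) ≤ nucNorm (a • X) + nucNorm (b • Y) := nuc_add _ _
    _ ≤ a * nucNorm X + b * nucNorm Y := add_le_add (nuc_smul_le ha _) (nuc_smul_le hb _)
    _ ≤ a * 1 + b * 1 := add_le_add
        (mul_le_mul_of_nonneg_left hX ha) (mul_le_mul_of_nonneg_left hY hb)
    _ = 1 := by rw [mul_one, mul_one, hab]

lemma nuc_continuous : Continuous (nucNorm : ((∀ k, Fin (n k)) → ℝ) → ℝ) := by
  have hsub : ∀ X Y : (∀ k, Fin (n k)) → ℝ,
      nucNorm X - nucNorm Y ≤ ∑ j, |X j - Y j| := by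
    intro X Y
    have h1 : nucNorm X ≤ nucNorm Y + nucNorm (X - Y) := by
      have : X = Y + (X - Y) := by abel
      calc nucNorm X = nucNorm (Y + (X - Y)) := by rw [← this]
        _ ≤ nucNorm Y + nucNorm (X - Y) := nuc_add _ _
    have h2 : nucNorm (X - Y) ≤ ∑ j, |X j - Y j| := by
      simpa using nuc_le_sum_abs (X - Y)
    linarith
  have : LipschitzWith (Fintype.card (∀ k, Fin (n k)))
      (nucNorm : ((∀ k, Fin (n k)) → ℝ) → ℝ) := by
    apply LipschitzWith.of_dist_le_mul
    intro X Y
    rw [Real.dist_eq, abs_sub_le_iff]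
    have hb : (∑ j, |X j - Y j|) ≤ (Fintype.card (∀ k, Fin (n k)) : ℝ) * dist X Y := by
      calc (∑ j, |X j - Y j|) ≤ ∑ _j : (∀ k, Fin (n k)), dist X Y := by
            apply Finset.sum_le_sum
            intro j _
            rw [← Real.dist_eq]
            exact dist_le_pi_dist X Y j
        _ = (Fintype.card (∀ k, Fin (n k)) : ℝ) * dist X Y := by
            rw [Finset.sum_const, Finset.card_univ, nsmul_eq_mul]
    constructor
    · exact le_trans (hsub X Y) (by simpa using hb)
    · refine le_trans (hsub Y X) ?_
      have : (∑ j, |Y j - X j|) = ∑ j, |X j - Y j| := by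
        apply Finset.sum_congr rfl; intro j _; exact abs_sub_comm _ _
      rw [this]
      simpa using hb
  exact this.continuous

lemma nucBall_closed : IsClosed {X : (∀ k, Fin (n k)) → ℝ | nucNorm X ≤ 1} :=
  isClosed_le nuc_continuous continuous_const

end TensorDualAux
namespace TensorDualAux

variable {d : ℕ} {n : Fin d → ℕ}

/-- Signed rank-one tensors of unit vectors. -/
def S (n : Fin d → ℕ) : Set ((∀ k, Fin (n k)) → ℝ) :=
  {Y | ∃ (ε : ℝ) (x : ∀ k, EuclideanSpace ℝ (Fin (n k))),
    (ε = 1 ∨ ε = -1) ∧ (∀ k, ‖x k‖ = 1) ∧ Y = fun i => ε * ∏ k, x k (i k)}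

lemma S_nuc_le_one {Y : (∀ k, Fin (n k)) → ℝ} (hY : Y ∈ S n) : nucNorm Y ≤ 1 := by
  obtain ⟨ε, x, hε, hx, rfl⟩ := hY
  have hmem : (1 : ℝ) ∈ nSet (fun i => ε * ∏ k, x k (i k)) := by
    refine ⟨1, fun _ => ε, fun _ => x, fun _ k => hx k, ?_, ?_⟩
    · intro j; simp
    · rcases hε with rfl | rfl <;> simp
  exact nuc_le hmem

lemma closure_hull_sub :
    closure (convexHull ℝ (S n)) ⊆ {X : (∀ k, Fin (n k)) → ℝ | nucNorm X ≤ 1} :=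
  closure_minimal (convexHull_min (fun _ hY => S_nuc_le_one hY) nucBall_convex) nucBall_closed

lemma tensor_mem_closure_hull (ε : ℝ) (hε : ε = 1 ∨ ε = -1)
    (x : ∀ k, EuclideanSpace ℝ (Fin (n k))) (hx : ∀ k, ‖x k‖ = 1) :
    (fun i => ε * ∏ k, x k (i k)) ∈ closure (convexHull ℝ (S n)) :=
  subset_closure (subset_convexHull ℝ _ ⟨ε, x, hε, hx, rfl⟩)

lemma zero_mem_closure_hull (hn : ∀ k, 0 < n k) :
    (0 : (∀ k, Fin (n k)) → ℝ) ∈ closure (convexHull ℝ (S n)) := by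
  set x : ∀ k, EuclideanSpace ℝ (Fin (n k)) := bvec (fun k => ⟨0, hn k⟩) with hxdef
  have hx : ∀ k, ‖x k‖ = 1 := fun k => bvec_norm _ k
  have ha : (fun i => (1:ℝ) * ∏ k, x k (i k)) ∈ convexHull ℝ (S n) :=
    subset_convexHull ℝ _ ⟨1, x, Or.inl rfl, hx, rfl⟩
  have hb : (fun i => (-1:ℝ) * ∏ k, x k (i k)) ∈ convexHull ℝ (S n) :=
    subset_convexHull ℝ _ ⟨-1, x, Or.inr rfl, hx, rfl⟩
  have hmid := (convex_convexHull ℝ (S n)) ha hb (by norm_num : (0:ℝ) ≤ 1/2)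
    (by norm_num : (0:ℝ) ≤ 1/2) (by norm_num)
  apply subset_closure
  convert hmid using 1
  funext i
  simp only [Pi.add_apply, Pi.smul_apply, smul_eq_mul, Pi.zero_apply]
  ring

/-- The hard direction: the nuclear norm is at most the sup of pairings with
spectral-unit tensors. -/
lemma nuc_le_sSup (hn : ∀ k, 0 < n k) (T : (∀ k, Fin (n k)) → ℝ)
    (R2 : Set ℝ)
    (hR2 : R2 = { r : ℝ | ∃ X : (∀ k, Fin (n k)) → ℝ,
        specNorm X ≤ 1 ∧ r = ∑ i, T i * X i })
    (hbdd : BddAbove R2) (h0 : (0 : ℝ) ∈ R2) :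
    nucNorm T ≤ sSup R2 := by
  by_contra hlt
  push_neg at hlt
  have hs0 : (0 : ℝ) ≤ sSup R2 := le_csSup hbdd h0
  set s' : ℝ := (sSup R2 + nucNorm T) / 2 with hs'
  have h1 : sSup R2 < s' := by rw [hs']; linarith
  have h2 : s' < nucNorm T := by rw [hs']; linarith
  have hs'pos : 0 < s' := by rw [hs']; linarith
  set p : (∀ k, Fin (n k)) → ℝ := s'⁻¹ • T with hp
  have hTp : T = s' • p := by
    rw [hp, smul_smul, mul_inv_cancel₀ (ne_of_gt hs'pos), one_smul]
  have hpC : p ∉ closure (convexHull ℝ (S n)) := by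
    intro hmem
    have hle1 : nucNorm p ≤ 1 := closure_hull_sub hmem
    have hcon : nucNorm T ≤ s' := by
      calc nucNorm T = nucNorm (s' • p) := by rw [← hTp]
        _ ≤ s' * nucNorm p := nuc_smul_le hs'pos.le p
        _ ≤ s' * 1 := mul_le_mul_of_nonneg_left hle1 hs'pos.le
        _ = s' := mul_one _
    linarith
  obtain ⟨f, u, hfu, hup⟩ := geometric_hahn_banach_closed_point
    ((convex_convexHull ℝ (S n)).closure) isClosed_closure hpC
  set F : (∀ k, Fin (n k)) → ℝ := fun j => f (Pi.single j 1) with hF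
  have f_eq : ∀ Y : (∀ k, Fin (n k)) → ℝ, f Y = ∑ j, Y j * F j := by
    intro Y
    have hY : Y = ∑ j, Y j • (Pi.single j (1:ℝ) : (∀ k, Fin (n k)) → ℝ) := by
      funext m
      rw [Finset.sum_apply]
      simp_rw [Pi.smul_apply, Pi.single_apply, smul_eq_mul, mul_ite, mul_one, mul_zero]
      simp
    conv_lhs => rw [hY]
    rw [map_sum]
    apply Finset.sum_congr rfl
    intro j _
    rw [map_smul, smul_eq_mul, hF]
  have hu_pos : 0 < u := by
    have h := hfu 0 (zero_mem_closure_hull hn)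
    simpa using h
  have habs : ∀ x : ∀ k, EuclideanSpace ℝ (Fin (n k)), (∀ k, ‖x k‖ = 1) →
      |∑ i, F i * ∏ k, x k (i k)| ≤ u := by
    intro x hx
    have key : ∀ ε : ℝ, ε = 1 ∨ ε = -1 → ε * (∑ i, F i * ∏ k, x k (i k)) < u := by
      intro ε hε
      have hm := hfu _ (tensor_mem_closure_hull ε hε x hx)
      rw [f_eq] at hm
      calc ε * (∑ i, F i * ∏ k, x k (i k))
          = ∑ i, (ε * ∏ k, x k (i k)) * F i := by
            rw [Finset.mul_sum]; apply Finset.sum_congr rfl; intro i _; ring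
        _ < u := hm
    have hk1 := key 1 (Or.inl rfl)
    have hk2 := key (-1) (Or.inr rfl)
    rw [abs_le]
    constructor <;> nlinarith
  set X : (∀ k, Fin (n k)) → ℝ := fun j => u⁻¹ * F j with hXdef
  have hspecX : specNorm X ≤ 1 := by
    rw [specNorm_eq]
    apply csSup_le (sSet_nonempty hn X)
    rintro r ⟨x, hx, rfl⟩
    have hre : (∑ i, X i * ∏ k, x k (i k)) = u⁻¹ * ∑ i, F i * ∏ k, x k (i k) := by
      rw [Finset.mul_sum]
      apply Finset.sum_congr rfl
      intro i _
      rw [hXdef]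
      ring
    rw [hre, abs_mul, abs_of_nonneg (inv_nonneg.mpr hu_pos.le)]
    calc u⁻¹ * |∑ i, F i * ∏ k, x k (i k)| ≤ u⁻¹ * u :=
        mul_le_mul_of_nonneg_left (habs x hx) (inv_nonneg.mpr hu_pos.le)
      _ = 1 := inv_mul_cancel₀ (ne_of_gt hu_pos)
  have hpair : (∑ i, T i * X i) = u⁻¹ * f T := by
    rw [f_eq, Finset.mul_sum]
    apply Finset.sum_congr rfl
    intro i _
    rw [hXdef]
    ring
  have hfT : s' * u < f T := by
    have hfs : f T = s' * f p := by rw [hTp, map_smul, smul_eq_mul]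
    rw [hfs]
    exact (mul_lt_mul_iff_right₀ hs'pos).mpr hup
  have hgt : s' < ∑ i, T i * X i := by
    rw [hpair]
    have he : u⁻¹ * (s' * u) = s' := by field_simp
    calc s' = u⁻¹ * (s' * u) := he.symm
      _ < u⁻¹ * f T := by
          apply mul_lt_mul_of_pos_left hfT (inv_pos.mpr hu_pos)
  have hmem2 : (∑ i, T i * X i) ∈ R2 := by rw [hR2]; exact ⟨X, hspecX, rfl⟩
  have hle2 := le_csSup hbdd hmem2
  linarith

end TensorDualAux
open TensorDualAux
theorem stmt_5 {d : ℕ} (n : Fin d → ℕ) (hn : ∀ k, 0 < n k)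
    (T : (∀ k, Fin (n k)) → ℝ) :
    specNorm T = sSup { r : ℝ | ∃ X : (∀ k, Fin (n k)) → ℝ,
        nucNorm X ≤ 1 ∧ r = ∑ i, T i * X i } ∧
    nucNorm T = sSup { r : ℝ | ∃ X : (∀ k, Fin (n k)) → ℝ,
        specNorm X ≤ 1 ∧ r = ∑ i, T i * X i } := by
  have hzero : nucNorm (fun _ : ∀ k, Fin (n k) => (0:ℝ)) ≤ 1 := by
    have h := nuc_le_sum_abs (fun _ : ∀ k, Fin (n k) => (0:ℝ))
    simpa using h.trans (by simp)
  have hspec0 : specNorm (fun _ : ∀ k, Fin (n k) => (0:ℝ)) ≤ 1 := by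
    rw [specNorm_eq]
    apply csSup_le (sSet_nonempty hn _)
    rintro r ⟨x, hx, rfl⟩
    simp
  constructor
  · set R1 := { r : ℝ | ∃ X : (∀ k, Fin (n k)) → ℝ,
        nucNorm X ≤ 1 ∧ r = ∑ i, T i * X i } with hR1
    have hub : ∀ r ∈ R1, r ≤ specNorm T := by
      rintro r ⟨X, hX1, rfl⟩
      calc (∑ i, T i * X i) ≤ specNorm T * nucNorm X := pair_le_spec_mul_nuc hn T X
        _ ≤ specNorm T * 1 := mul_le_mul_of_nonneg_left hX1 (spec_nonneg hn T)
        _ = specNorm T := mul_one _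
    have h0 : (0:ℝ) ∈ R1 := by
      refine ⟨fun _ => 0, hzero, by simp⟩
    have hbdd : BddAbove R1 := ⟨specNorm T, hub⟩
    apply le_antisymm
    · rw [specNorm_eq]
      apply csSup_le (sSet_nonempty hn T)
      rintro r ⟨x, hx, rfl⟩
      set pval : ℝ := ∑ i, T i * ∏ k, x k (i k) with hpval
      set ε : ℝ := if 0 ≤ pval then 1 else -1 with hε
      have hεor : ε = 1 ∨ ε = -1 := by
        rw [hε]; split_ifs <;> simp
      have hεp : ε * pval = |pval| := by
        rw [hε]
        split_ifs with h
        · rw [one_mul, abs_of_nonneg h]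
        · rw [abs_of_neg (lt_of_not_ge h)]; ring
      apply le_csSup hbdd
      refine ⟨fun i => ε * ∏ k, x k (i k), S_nuc_le_one ⟨ε, x, hεor, hx, rfl⟩, ?_⟩
      rw [← hεp, hpval, Finset.mul_sum]
      apply Finset.sum_congr rfl
      intro i _
      ring
    · exact csSup_le ⟨0, h0⟩ hub
  · set R2 := { r : ℝ | ∃ X : (∀ k, Fin (n k)) → ℝ,
        specNorm X ≤ 1 ∧ r = ∑ i, T i * X i } with hR2
    have hub : ∀ r ∈ R2, r ≤ nucNorm T := by
      rintro r ⟨X, hX1, rfl⟩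
      calc (∑ i, T i * X i) = ∑ i, X i * T i :=
            Finset.sum_congr rfl fun i _ => mul_comm _ _
        _ ≤ specNorm X * nucNorm T := pair_le_spec_mul_nuc hn X T
        _ ≤ 1 * nucNorm T := mul_le_mul_of_nonneg_right hX1 (nuc_nonneg T)
        _ = nucNorm T := one_mul _
    have h0 : (0:ℝ) ∈ R2 := ⟨fun _ => 0, hspec0, by simp⟩
    have hbdd : BddAbove R2 := ⟨nucNorm T, hub⟩
    exact le_antisymm (nuc_le_sSup hn T R2 hR2 hbdd h0) (csSup_le ⟨0, h0⟩ hub)
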